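/- Let (X,d) be a Mandelkern locally compact metric space (every closed ball of finite radius in X is compact) and let f be a uniform equivalence of X that is expansive. Then for every x ∈ X the following are equivalent: (i) x is a topologically stable point of f; (ii) x is a weak topologically stable point of f; (iii) x is an α-persistent point of f. -/

import Mathlib

open Metric

/-- `g` is a uniform equivalence: both `g` and `g⁻¹` are uniformly continuous. -/
def IsUniformEquiv {X : Type*} [MetricSpace X] (g : Equiv.Perm X) : Prop :=
  UniformContinuous g ∧ UniformContinuous g.symm

/-- The `C⁰`-distance `D(f,g) = sup_x min(d(f x, g x), 1)`. -/
noncomputable def C0Dist {X : Type*} [MetricSpace X] (f g : X → X) : ℝ :=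
  ⨆ x : X, min (dist (f x) (g x)) 1

/-- The closure of the full `g`-orbit of `x`. -/
def OrbitClosure {X : Type*} [MetricSpace X] (g : Equiv.Perm X) (x : X) : Set X :=
  closure (Set.range fun n : ℤ => (g ^ n) x)

/-- `x` is a topologically stable point of `f`. -/
def IsTopStablePt {X : Type*} [MetricSpace X] (f : Equiv.Perm X) (x : X) : Prop :=
  ∀ ε : ℝ, 0 < ε → ∃ δ : ℝ, 0 < δ ∧
    ∀ g : Equiv.Perm X, IsUniformEquiv g → C0Dist f g < δ →
      ∃ h : OrbitClosure g x → X, Continuous h ∧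
        (∀ (y : X) (hy : y ∈ OrbitClosure g x) (hgy : g y ∈ OrbitClosure g x),
          f (h ⟨y, hy⟩) = h ⟨g y, hgy⟩) ∧
        (∀ y : OrbitClosure g x, dist (h y) (y : X) < ε)

/-- `x` is a weak topologically stable point of `f`. -/
def IsWeakTopStablePt {X : Type*} [MetricSpace X] (f : Equiv.Perm X) (x : X) : Prop :=
  ∀ ε : ℝ, 0 < ε → ∃ δ : ℝ, 0 < δ ∧
    ∀ g : Equiv.Perm X, IsUniformEquiv g → C0Dist f g < δ →
      ∃ h : OrbitClosure g x → X, Continuous h ∧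
        (∀ (y : OrbitClosure g x) (n : ℤ),
          dist ((f ^ n) (h y)) ((g ^ n) (y : X)) < ε) ∧
        (∀ y : OrbitClosure g x, dist (h y) (y : X) < ε)

/-- `x` is an `α`-persistent point of `f`. -/
def IsAlphaPersistentPt {X : Type*} [MetricSpace X] (f : Equiv.Perm X) (x : X) : Prop :=
  ∀ ε : ℝ, 0 < ε → ∃ δ : ℝ, 0 < δ ∧
    ∀ g : Equiv.Perm X, IsUniformEquiv g → C0Dist f g < δ →
      ∃ y : X, ∀ n : ℤ, dist ((f ^ n) y) ((g ^ n) x) < ε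

section Aux

open Filter Topology

variable {X : Type*} [MetricSpace X]

private lemma contPerm (g : Equiv.Perm X) (hg : IsUniformEquiv g) (n : ℤ) :
    Continuous fun y : X => (g ^ n) y := by
  induction n using Int.induction_on with
  | zero => simpa using continuous_id'
  | succ n ih =>
      have e : ∀ y : X, (g ^ ((n : ℤ) + 1)) y = (g ^ (n : ℤ)) (g y) := by
        intro y; rw [zpow_add_one, Equiv.Perm.mul_apply]
      simpa only [e, Function.comp_def] using ih.comp hg.1.continuous
  | pred n ih =>
      have e : ∀ y : X, (g ^ (-(n : ℤ) - 1)) y = (g ^ (-(n : ℤ))) (g.symm y) := by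
        intro y; rw [zpow_sub_one, Equiv.Perm.mul_apply]; rfl
      simpa only [e, Function.comp_def] using ih.comp hg.2.continuous

omit [MetricSpace X] in
private lemma zpowApply (g : Equiv.Perm X) (n m : ℤ) (y : X) :
    (g ^ (n + m)) y = (g ^ n) ((g ^ m) y) := by
  rw [zpow_add, Equiv.Perm.mul_apply]

private lemma mem_oc_zpow (g : Equiv.Perm X) (hg : IsUniformEquiv g) (x : X) (n : ℤ)
    {y : X} (hy : y ∈ OrbitClosure g x) : (g ^ n) y ∈ OrbitClosure g x := by
  have hmt : Set.MapsTo (fun y : X => (g ^ n) y)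
      (Set.range fun m : ℤ => (g ^ m) x) (Set.range fun m : ℤ => (g ^ m) x) := by
    rintro _ ⟨m, rfl⟩
    exact ⟨n + m, zpowApply g n m x⟩
  exact hmt.closure (contPerm g hg n) hy

private lemma shadow_uniq (f : Equiv.Perm X) {c : ℝ}
    (hexp : ∀ x y : X, x ≠ y → ∃ n : ℤ, c < dist ((f ^ n) x) ((f ^ n) y))
    {ε' : ℝ} (hcε : 2 * ε' < c) {p : ℤ → X} {w w' : X}
    (hw : ∀ n : ℤ, dist ((f ^ n) w) (p n) ≤ ε')
    (hw' : ∀ n : ℤ, dist ((f ^ n) w') (p n) ≤ ε') : w = w' := by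
  by_contra hne
  obtain ⟨n, hn⟩ := hexp w w' hne
  have h1 : dist ((f ^ n) w) ((f ^ n) w') ≤ dist ((f ^ n) w) (p n) + dist (p n) ((f ^ n) w') :=
    dist_triangle _ _ _
  have h2 := hw n
  have h3 := hw' n
  rw [dist_comm] at h3
  linarith

private lemma shadow_limit (f g : Equiv.Perm X) (hf : IsUniformEquiv f) (hg : IsUniformEquiv g)
    {ε' : ℝ} {z w : X} {zs ws : ℕ → X}
    (hz : Tendsto zs atTop (𝓝 z)) (hwt : Tendsto ws atTop (𝓝 w))
    (hsh : ∀ k, ∀ n : ℤ, dist ((f ^ n) (ws k)) ((g ^ n) (zs k)) ≤ ε') :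
    ∀ n : ℤ, dist ((f ^ n) w) ((g ^ n) z) ≤ ε' := by
  intro n
  have t1 : Tendsto (fun k => (f ^ n) (ws k)) atTop (𝓝 ((f ^ n) w)) :=
    ((contPerm f hf n).tendsto w).comp hwt
  have t2 : Tendsto (fun k => (g ^ n) (zs k)) atTop (𝓝 ((g ^ n) z)) :=
    ((contPerm g hg n).tendsto z).comp hz
  exact le_of_tendsto (t1.dist t2) (Eventually.of_forall fun k => hsh k n)

private lemma stable_to_weak (f : Equiv.Perm X) (x : X) :
    IsTopStablePt f x → IsWeakTopStablePt f x := by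
  intro hS ε hε
  obtain ⟨δ, hδ, hmain⟩ := hS ε hε
  refine ⟨δ, hδ, fun g hg hgδ => ?_⟩
  obtain ⟨h, hcont, hconj, hclose⟩ := hmain g hg hgδ
  have key : ∀ n : ℤ, ∀ y : X, ∀ hy : y ∈ OrbitClosure g x,
      (f ^ n) (h ⟨y, hy⟩) = h ⟨(g ^ n) y, mem_oc_zpow g hg x n hy⟩ := by
    intro n
    induction n using Int.induction_on with
    | zero =>
        intro y hy
        simp only [zpow_zero, Equiv.Perm.one_apply]
    | succ n ih =>
        intro y hy
        have hgny : (g ^ (n : ℤ)) y ∈ OrbitClosure g x := mem_oc_zpow g hg x n hy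
        have hggny : g ((g ^ (n : ℤ)) y) ∈ OrbitClosure g x := by
          have := mem_oc_zpow g hg x 1 hgny
          simpa [zpow_one] using this
        have e1 : (f ^ ((n : ℤ) + 1)) (h ⟨y, hy⟩) = f ((f ^ (n : ℤ)) (h ⟨y, hy⟩)) := by
          rw [add_comm, zpowApply f 1 (n : ℤ), zpow_one]
        rw [e1, ih y hy, hconj _ hgny hggny]
        congr 1
        refine Subtype.ext ?_
        show g ((g ^ (n : ℤ)) y) = (g ^ ((n : ℤ) + 1)) y
        rw [add_comm, zpowApply g 1 (n : ℤ), zpow_one]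
    | pred n ih =>
        intro y hy
        have hmem : g⁻¹ y ∈ OrbitClosure g x := by
          have := mem_oc_zpow g hg x (-1) hy
          simpa using this
        have hmem' : g (g⁻¹ y) ∈ OrbitClosure g x := by
          simpa using hy
        have e1 : f⁻¹ (h ⟨y, hy⟩) = h ⟨g⁻¹ y, hmem⟩ := by
          have h2 : (⟨y, hy⟩ : OrbitClosure g x) = ⟨g (g⁻¹ y), hmem'⟩ :=
            Subtype.ext (by simp)
          rw [h2, ← hconj (g⁻¹ y) hmem hmem', Equiv.Perm.inv_def f, Equiv.symm_apply_apply]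
        have e2 : (-(n : ℤ) - 1) = (-(n : ℤ)) + (-1) := by ring
        rw [e2, zpowApply f (-(n : ℤ)) (-1)]
        have e3 : (f ^ (-1 : ℤ)) (h ⟨y, hy⟩) = f⁻¹ (h ⟨y, hy⟩) := by
          rw [zpow_neg_one]
        rw [e3, e1, ih (g⁻¹ y) hmem]
        congr 1
        refine Subtype.ext ?_
        show (g ^ (-(n : ℤ))) (g⁻¹ y) = (g ^ ((-(n : ℤ)) + (-1))) y
        rw [zpowApply g (-(n : ℤ)) (-1), zpow_neg_one]
  refine ⟨h, hcont, ?_, hclose⟩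
  rintro ⟨y, hy⟩ n
  rw [key n y hy]
  exact hclose _

private lemma x_mem_oc (g : Equiv.Perm X) (x : X) : x ∈ OrbitClosure g x :=
  subset_closure ⟨0, by simp⟩

private lemma weak_to_persist (f : Equiv.Perm X) (x : X) :
    IsWeakTopStablePt f x → IsAlphaPersistentPt f x := by
  intro hW ε hε
  obtain ⟨δ, hδ, hmain⟩ := hW ε hε
  refine ⟨δ, hδ, fun g hg hgδ => ?_⟩
  obtain ⟨h, -, htrack, -⟩ := hmain g hg hgδ
  exact ⟨h ⟨x, x_mem_oc g x⟩, fun n => htrack ⟨x, x_mem_oc g x⟩ n⟩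

private lemma persist_to_stable
    (hX : ∀ (x : X) (r : ℝ), IsCompact (Metric.closedBall x r))
    (f : Equiv.Perm X) (hf : IsUniformEquiv f) {c : ℝ} (hc : 0 < c)
    (hexp : ∀ x y : X, x ≠ y → ∃ n : ℤ, c < dist ((f ^ n) x) ((f ^ n) y))
    (x : X) : IsAlphaPersistentPt f x → IsTopStablePt f x := by
  intro hP ε hε
  set ε' : ℝ := min (ε / 2) (c / 3) with hε'def
  have hε'pos : 0 < ε' := lt_min (by linarith) (by linarith)
  have h2ε' : 2 * ε' < c := by
    have := min_le_right (ε / 2) (c / 3)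
    simp only [← hε'def] at this
    linarith
  have hε'ε : ε' < ε := lt_of_le_of_lt (min_le_left _ _) (by linarith)
  obtain ⟨δ, hδ, hper⟩ := hP ε' hε'pos
  refine ⟨δ, hδ, fun g hg hgδ => ?_⟩
  obtain ⟨y₀, hy₀⟩ := hper g hg hgδ
  -- existence of shadows on the orbit closure
  have hex : ∀ z ∈ OrbitClosure g x, ∃ w : X, ∀ n : ℤ,
      dist ((f ^ n) w) ((g ^ n) z) ≤ ε' := by
    intro z hz
    rw [OrbitClosure, mem_closure_iff_seq_limit] at hz
    obtain ⟨zs, hmem, hlim⟩ := hz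
    choose ms hms using hmem
    set ws : ℕ → X := fun k => (f ^ ms k) y₀ with hws
    have hshk : ∀ k, ∀ n : ℤ, dist ((f ^ n) (ws k)) ((g ^ n) (zs k)) ≤ ε' := by
      intro k n
      rw [← hms k]
      show dist ((f ^ n) ((f ^ ms k) y₀)) ((g ^ n) ((g ^ ms k) x)) ≤ ε'
      rw [← zpowApply f n (ms k), ← zpowApply g n (ms k)]
      exact (hy₀ (n + ms k)).le
    obtain ⟨K, hK⟩ := Metric.tendsto_atTop.mp hlim 1 one_pos
    have hball : ∀ k, ws (k + K) ∈ Metric.closedBall z (ε' + 1) := by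
      intro k
      have h0 := hshk (k + K) 0
      simp only [zpow_zero, Equiv.Perm.one_apply] at h0
      have h1 : dist (zs (k + K)) z < 1 := hK (k + K) (Nat.le_add_left K k)
      have := dist_triangle (ws (k + K)) (zs (k + K)) z
      rw [Metric.mem_closedBall]
      linarith
    obtain ⟨w, -, φ, hφ, hwt⟩ := (hX z (ε' + 1)).tendsto_subseq hball
    have hzt : Tendsto (fun k => zs (φ k + K)) atTop (𝓝 z) := by
      refine hlim.comp (tendsto_atTop_mono (fun k => ?_) tendsto_id)
      exact le_trans hφ.le_apply (Nat.le_add_right _ K)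
    exact ⟨w, shadow_limit f g hf hg hzt hwt (fun k n => hshk (φ k + K) n)⟩
  choose h hh using fun z : OrbitClosure g x => hex z z.2
  have huniq : ∀ (z w w' : X), (∀ n : ℤ, dist ((f ^ n) w) ((g ^ n) z) ≤ ε') →
      (∀ n : ℤ, dist ((f ^ n) w') ((g ^ n) z) ≤ ε') → w = w' :=
    fun z w w' hw hw' => shadow_uniq f hexp h2ε' (p := fun n => (g ^ n) z) hw hw'
  refine ⟨h, ?_, ?_, ?_⟩
  · -- continuity
    rw [continuous_iff_seqContinuous]
    intro u a hu
    by_contra hcon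
    rw [Metric.tendsto_atTop] at hcon
    push_neg at hcon
    obtain ⟨ε₀, hε₀, hcon⟩ := hcon
    have hfreq : ∃ᶠ k in atTop, ε₀ ≤ dist (h (u k)) (h a) := by
      rw [frequently_atTop]
      intro N
      obtain ⟨k, hk, hk2⟩ := hcon N
      exact ⟨k, hk, hk2⟩
    have hcoe : Tendsto (fun k => (u k : X)) atTop (𝓝 (a : X)) :=
      (continuous_subtype_val.tendsto a).comp hu
    have hev : ∀ᶠ k in atTop, dist ((u k : X)) ((a : X)) < 1 := by
      obtain ⟨N, hN⟩ := Metric.tendsto_atTop.mp hcoe 1 one_pos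
      exact eventually_atTop.mpr ⟨N, hN⟩
    obtain ⟨φ, hφ, hprop⟩ := extraction_of_frequently_atTop (hfreq.and_eventually hev)
    have hball : ∀ k, h (u (φ k)) ∈ Metric.closedBall (a : X) (ε' + 1) := by
      intro k
      have h0 := hh (u (φ k)) 0
      simp only [zpow_zero, Equiv.Perm.one_apply] at h0
      have := dist_triangle (h (u (φ k))) ((u (φ k) : X)) (a : X)
      rw [Metric.mem_closedBall]
      have := (hprop k).2
      linarith
    obtain ⟨w, -, ψ, hψ, hwt⟩ := (hX (a : X) (ε' + 1)).tendsto_subseq hball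
    have hzt : Tendsto (fun k => (u (φ (ψ k)) : X)) atTop (𝓝 (a : X)) :=
      hcoe.comp ((hφ.comp hψ).tendsto_atTop)
    have hsw : ∀ n : ℤ, dist ((f ^ n) w) ((g ^ n) (a : X)) ≤ ε' :=
      shadow_limit f g hf hg hzt hwt (fun k n => hh (u (φ (ψ k))) n)
    have hw_eq : w = h a := huniq (a : X) w (h a) hsw (hh a)
    have hdt : Tendsto (fun k => dist (h (u (φ (ψ k)))) (h a)) atTop (𝓝 (dist w (h a))) :=
      hwt.dist tendsto_const_nhds
    rw [hw_eq, dist_self] at hdt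
    have : ε₀ ≤ 0 := ge_of_tendsto hdt (Eventually.of_forall fun k => (hprop (ψ k)).1)
    linarith
  · -- conjugacy
    intro y hy hgy
    refine huniq (g y) (f (h ⟨y, hy⟩)) (h ⟨g y, hgy⟩) ?_ (hh ⟨g y, hgy⟩)
    intro n
    have e1 : (f ^ n) (f (h ⟨y, hy⟩)) = (f ^ (n + 1)) (h ⟨y, hy⟩) := by
      rw [zpowApply f n 1, zpow_one]
    have e2 : (g ^ n) (g y) = (g ^ (n + 1)) y := by
      rw [zpowApply g n 1, zpow_one]
    rw [e1, e2]
    exact hh ⟨y, hy⟩ (n + 1)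
  · -- closeness
    intro y
    have h0 := hh y 0
    simp only [zpow_zero, Equiv.Perm.one_apply] at h0
    exact lt_of_le_of_lt h0 hε'ε

end Aux

/-- For an expansive uniform equivalence of a Mandelkern locally compact
metric space, topological stability, weak topological stability and `α`-persistence at a
point are equivalent. -/
theorem topStable_iff_weakTopStable_iff_alphaPersistent
    {X : Type*} [MetricSpace X]
    (hX : ∀ (x : X) (r : ℝ), IsCompact (closedBall x r))
    (f : Equiv.Perm X) (hf : IsUniformEquiv f)
    (hexp : ∃ c : ℝ, 0 < c ∧ ∀ x y : X, x ≠ y →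
      ∃ n : ℤ, c < dist ((f ^ n) x) ((f ^ n) y))
    (x : X) :
    (IsTopStablePt f x ↔ IsWeakTopStablePt f x) ∧
    (IsWeakTopStablePt f x ↔ IsAlphaPersistentPt f x) := by
  obtain ⟨c, hc, hexpc⟩ := hexp
  have h1 := stable_to_weak f x
  have h2 := weak_to_persist f x
  have h3 := persist_to_stable hX f hf hc hexpc x
  exact ⟨⟨h1, fun hw => h3 (h2 hw)⟩, ⟨h2, fun hp => h1 (h3 hp)⟩⟩
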